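/- One-step inequality for SPS_max with c > 1/2 in the convex case: for x^{k+1} = x^k − γ_k∇f_i(x^k) with γ_k = min{(f_i(x^k)−f_i*)/(c‖∇f_i(x^k)‖²), γ_b} and f_i convex, ‖x^{k+1} − x*‖² ≤ ‖x^k − x*‖² − γ_k(2 − 1/c)(f_i(x^k) − f_i*) + 2γ_k(f_i(x*) − f_i*). -/
import Mathlib


open scoped RealInnerProductSpace

/-- One-step inequality for `SPS_max` with `c > 1/2` in the convex case:
`‖x^{k+1} − x*‖² ≤ ‖x^k − x*‖² − γ_k(2 − 1/c)(f_i(x^k) − f_i*) + 2γ_k(f_i(x*) − f_i*)`. -/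
theorem stmt9 {d : ℕ} (fi : EuclideanSpace ℝ (Fin d) → ℝ)
    (Gi : EuclideanSpace ℝ (Fin d) → EuclideanSpace ℝ (Fin d))
    (hgrad : ∀ x, HasGradientAt fi (Gi x) x)
    (hconv : ∀ x y, fi y ≥ fi x + ⟪Gi x, y - x⟫)
    (fistar : ℝ) (hfistar : IsGLB (Set.range fi) fistar)
    (c γb : ℝ) (hc : 1 / 2 < c) (hγb : 0 < γb)
    (xstar xk : EuclideanSpace ℝ (Fin d)) (hGxk : Gi xk ≠ 0)
    (γk : ℝ) (hγk : γk = min ((fi xk - fistar) / (c * ‖Gi xk‖ ^ 2)) γb)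
    (hγquad : γk ^ 2 * ‖Gi xk‖ ^ 2 ≤ (γk / c) * (fi xk - fistar))
    (xnext : EuclideanSpace ℝ (Fin d)) (hxnext : xnext = xk - γk • Gi xk) :
    ‖xnext - xstar‖ ^ 2 ≤
      ‖xk - xstar‖ ^ 2 - γk * (2 - 1 / c) * (fi xk - fistar) +
        2 * γk * (fi xstar - fistar) := by
  have hc0 : (0:ℝ) < c := lt_trans (by norm_num) hc
  have hfk : fistar ≤ fi xk := hfistar.1 ⟨xk, rfl⟩
  have hG2 : (0:ℝ) < ‖Gi xk‖ ^ 2 := pow_pos (norm_pos_iff.mpr hGxk) 2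
  have hγ0 : 0 ≤ γk := by
    rw [hγk]
    exact le_min (div_nonneg (by linarith) (by positivity)) hγb.le
  have hexp : ‖xnext - xstar‖ ^ 2
      = ‖xk - xstar‖ ^ 2 - 2 * γk * ⟪Gi xk, xk - xstar⟫ + γk ^ 2 * ‖Gi xk‖ ^ 2 := by
    have : xnext - xstar = (xk - xstar) - γk • Gi xk := by rw [hxnext]; abel
    rw [this, norm_sub_sq_real, real_inner_smul_right, real_inner_comm, norm_smul]
    simp [abs_of_nonneg hγ0, mul_pow]
    ring
  have hcv := hconv xk xstar
  have hinner : fi xk - fi xstar ≤ ⟪Gi xk, xk - xstar⟫ := by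
    have : ⟪Gi xk, xstar - xk⟫ = - ⟪Gi xk, xk - xstar⟫ := by
      rw [show xstar - xk = -(xk - xstar) by abel, inner_neg_right]
    linarith [hcv, this.ge.trans_eq rfl]
  have h2 : 2 * γk * (fi xk - fi xstar) ≤ 2 * γk * ⟪Gi xk, xk - xstar⟫ :=
    mul_le_mul_of_nonneg_left hinner (by linarith)
  have : ‖xnext - xstar‖ ^ 2 ≤ ‖xk - xstar‖ ^ 2 - 2 * γk * (fi xk - fi xstar)
      + (γk / c) * (fi xk - fistar) := by rw [hexp]; linarith
  calc ‖xnext - xstar‖ ^ 2 ≤ _ := this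
    _ = ‖xk - xstar‖ ^ 2 - γk * (2 - 1 / c) * (fi xk - fistar)
        + 2 * γk * (fi xstar - fistar) := by field_simp; ring
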